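/- KL-divergence storage function dissipation: let z: [0,∞) → R^n solve ż = p − z for a continuous payoff p, fix s ∈ [0,1], and set ξ = (1+s)z and V(ξ) = (1/(1+s)²) D_KL(σ(ξ) ‖ (1/n)1_n). Then along trajectories, dV/dt ≤ p·y where y = (1/(1+s)) ∇σ(ξ) ξ; equivalently, dV/dt = (1/(1+s)) p^⊤∇σ(ξ)ξ − z^⊤∇σ(ξ)z ≤ p^⊤ y. -/

import Mathlib

open Matrix

noncomputable def softmax {n : ℕ} (v : Fin n → ℝ) : Fin n → ℝ :=
  fun i => Real.exp (v i) / ∑ j, Real.exp (v j)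

/-- The Jacobian of softmax: `diag(σ(v)) − σ(v)σ(v)ᵀ`. -/
noncomputable def softmaxJac {n : ℕ} (v : Fin n → ℝ) : Matrix (Fin n) (Fin n) ℝ :=
  Matrix.diagonal (softmax v) - Matrix.of fun i j => softmax v i * softmax v j

/-- KL divergence of `σ(ξ)` from the uniform distribution. -/
noncomputable def klFromUniform {n : ℕ} (ξ : Fin n → ℝ) : ℝ :=
  ∑ i, softmax ξ i * Real.log (softmax ξ i / (1 / (n : ℝ)))

lemma expsum_pos {n : ℕ} (hn : 0 < n) (v : Fin n → ℝ) : 0 < ∑ j, Real.exp (v j) :=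
  Finset.sum_pos (fun j _ => Real.exp_pos _) (by simp [Finset.univ_nonempty_iff, Fin.pos_iff_nonempty.mp hn])

lemma softmax_pos {n : ℕ} (hn : 0 < n) (v : Fin n → ℝ) (i : Fin n) : 0 < softmax v i :=
  div_pos (Real.exp_pos _) (expsum_pos hn v)

lemma sum_softmax {n : ℕ} (hn : 0 < n) (v : Fin n → ℝ) : ∑ i, softmax v i = 1 := by
  simp only [softmax, ← Finset.sum_div]
  exact div_self (ne_of_gt (expsum_pos hn v))

lemma dot_jac {n : ℕ} (v u w : Fin n → ℝ) :
    u ⬝ᵥ (softmaxJac v).mulVec w =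
      (∑ i, u i * softmax v i * w i) - (∑ i, u i * softmax v i) * (∑ i, softmax v i * w i) := by
  have hmv : (softmaxJac v).mulVec w
      = fun i => softmax v i * w i - softmax v i * ∑ j, softmax v j * w j := by
    ext i
    simp only [softmaxJac, Matrix.mulVec, dotProduct, Matrix.sub_apply, Matrix.of_apply,
      Matrix.diagonal_apply, sub_mul, ite_mul, zero_mul]
    rw [Finset.sum_sub_distrib, Finset.sum_ite_eq, if_pos (Finset.mem_univ i), Finset.mul_sum]
    congr 1
    exact Finset.sum_congr rfl fun j _ => by ring
  rw [hmv, dotProduct]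
  simp only [mul_sub]
  rw [Finset.sum_sub_distrib, Finset.sum_mul]
  congr 1
  · exact Finset.sum_congr rfl fun i _ => by ring
  · exact Finset.sum_congr rfl fun i _ => by ring

lemma quad_nonneg {n : ℕ} (hn : 0 < n) (v w : Fin n → ℝ) :
    0 ≤ w ⬝ᵥ (softmaxJac v).mulVec w := by
  rw [dot_jac]
  have h := Finset.sum_mul_sq_le_sq_mul_sq Finset.univ
    (fun i => Real.sqrt (softmax v i)) (fun i => Real.sqrt (softmax v i) * w i)
  have hL : ∑ i, Real.sqrt (softmax v i) * (Real.sqrt (softmax v i) * w i)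
      = ∑ i, softmax v i * w i :=
    Finset.sum_congr rfl fun i _ => by
      rw [← mul_assoc, Real.mul_self_sqrt (le_of_lt (softmax_pos hn v i))]
  have hM : ∑ i, Real.sqrt (softmax v i) ^ 2 = ∑ i, softmax v i :=
    Finset.sum_congr rfl fun i _ => Real.sq_sqrt (le_of_lt (softmax_pos hn v i))
  have hR : ∑ i, (Real.sqrt (softmax v i) * w i) ^ 2 = ∑ i, softmax v i * w i ^ 2 :=
    Finset.sum_congr rfl fun i _ => by
      rw [mul_pow, Real.sq_sqrt (le_of_lt (softmax_pos hn v i))]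
  rw [hL, hM, hR, sum_softmax hn v, one_mul] at h
  have h2 : ∑ i, w i * softmax v i * w i = ∑ i, softmax v i * w i ^ 2 :=
    Finset.sum_congr rfl fun i _ => by ring
  have h3 : ∑ i, w i * softmax v i = ∑ i, softmax v i * w i :=
    Finset.sum_congr rfl fun i _ => by ring
  rw [h2, h3, ← sq]
  linarith

lemma kl_eq {n : ℕ} (hn : 0 < n) (v : Fin n → ℝ) :
    klFromUniform v = (∑ i, (v i * Real.exp (v i)) / ∑ j, Real.exp (v j))
      - Real.log (∑ j, Real.exp (v j)) + Real.log n := by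
  have hE := expsum_pos hn v
  have : ∀ i : Fin n, softmax v i * Real.log (softmax v i / (1 / (n : ℝ)))
      = (v i * Real.exp (v i)) / (∑ j, Real.exp (v j))
        + softmax v i * (Real.log n - Real.log (∑ j, Real.exp (v j))) := by
    intro i
    have : Real.log (softmax v i / (1 / (n : ℝ)))
        = v i - Real.log (∑ j, Real.exp (v j)) + Real.log n := by
      have hdiv : softmax v i / (1 / (n : ℝ)) = softmax v i * n := by
        rw [div_div_eq_mul_div, div_one]
      have hnpos : (0:ℝ) < n := by exact_mod_cast hn
      rw [hdiv, Real.log_mul (ne_of_gt (softmax_pos hn v i)) (ne_of_gt hnpos), softmax,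
        Real.log_div (ne_of_gt (Real.exp_pos _)) (ne_of_gt hE), Real.log_exp]
    rw [this, softmax]
    ring
  rw [klFromUniform, Finset.sum_congr rfl fun i _ => this i, Finset.sum_add_distrib,
    ← Finset.sum_mul, sum_softmax hn v, one_mul]
  ring

set_option maxHeartbeats 2000000 in
theorem kl_storage_dissipation (n : ℕ) (hn : 0 < n)
    (p z : ℝ → (Fin n → ℝ)) (hp : Continuous p)
    (hz : ∀ t, HasDerivAt z (p t - z t) t)
    (s : ℝ) (hs : s ∈ Set.Icc (0:ℝ) 1) (t : ℝ) :
    HasDerivAt (fun t' => (1 / (1 + s)^2) * klFromUniform ((1 + s) • z t'))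
      ((1 / (1 + s)) * (p t ⬝ᵥ (softmaxJac ((1 + s) • z t)).mulVec ((1 + s) • z t))
        - z t ⬝ᵥ (softmaxJac ((1 + s) • z t)).mulVec (z t)) t ∧
    (1 / (1 + s)) * (p t ⬝ᵥ (softmaxJac ((1 + s) • z t)).mulVec ((1 + s) • z t))
        - z t ⬝ᵥ (softmaxJac ((1 + s) • z t)).mulVec (z t)
      ≤ p t ⬝ᵥ (1 / (1 + s)) • (softmaxJac ((1 + s) • z t)).mulVec ((1 + s) • z t) := by
  obtain ⟨hs0, hs1⟩ := hs
  have hc : (0:ℝ) < 1 + s := by linarith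
  have hcne : (1 + s) ≠ 0 := ne_of_gt hc
  set c : ℝ := 1 + s with hcdef
  -- coordinate derivatives
  have hd : ∀ i, HasDerivAt (fun t' => z t' i) (p t i - z t i) t := fun i =>
    hasDerivAt_pi.mp (hz t) i
  have ha : ∀ i, HasDerivAt (fun t' => c * z t' i) (c * (p t i - z t i)) t := fun i =>
    (hd i).const_mul c
  have he : ∀ i, HasDerivAt (fun t' => Real.exp (c * z t' i))
      (Real.exp (c * z t i) * (c * (p t i - z t i))) t := fun i => (ha i).exp
  have hE : HasDerivAt (fun t' => ∑ j, Real.exp (c * z t' j))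
      (∑ j, Real.exp (c * z t j) * (c * (p t j - z t j))) t :=
    HasDerivAt.fun_sum fun j _ => he j
  have hEpos : ∀ t', (0:ℝ) < ∑ j, Real.exp (c * z t' j) := fun t' =>
    Finset.sum_pos (fun j _ => Real.exp_pos _)
      (by simp [Finset.univ_nonempty_iff, Fin.pos_iff_nonempty.mp hn])
  have hEne : (∑ j, Real.exp (c * z t j)) ≠ 0 := ne_of_gt (hEpos t)
  have hterm : ∀ i, HasDerivAt
      (fun t' => (c * z t' i * Real.exp (c * z t' i)) / ∑ j, Real.exp (c * z t' j))
      (((c * (p t i - z t i) * Real.exp (c * z t i)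
          + c * z t i * (Real.exp (c * z t i) * (c * (p t i - z t i))))
          * (∑ j, Real.exp (c * z t j))
        - c * z t i * Real.exp (c * z t i)
          * (∑ j, Real.exp (c * z t j) * (c * (p t j - z t j))))
        / (∑ j, Real.exp (c * z t j))^2) t := fun i =>
    (((ha i).mul (he i)).div hE hEne)
  have hsum := HasDerivAt.fun_sum (u := Finset.univ) fun i _ => hterm i
  have hlog : HasDerivAt (fun t' => Real.log (∑ j, Real.exp (c * z t' j)))
      ((∑ j, Real.exp (c * z t j) * (c * (p t j - z t j))) / ∑ j, Real.exp (c * z t j)) t :=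
    hE.log hEne
  have hG := ((hsum.sub hlog).add_const (Real.log n)).const_mul (1 / c^2)
  have hfun : (fun t' => (1 / c^2) * klFromUniform (c • z t'))
      = (fun t' => (1 / c^2) * ((∑ i, (c * z t' i * Real.exp (c * z t' i))
          / ∑ j, Real.exp (c * z t' j))
        - Real.log (∑ j, Real.exp (c * z t' j)) + Real.log n)) := by
    funext t'
    rw [kl_eq hn]
    simp [Pi.smul_apply, smul_eq_mul]
  rw [hfun]
  constructor
  · convert hG using 1
    case e'_4 => rfl
    case e'_5 => rfl
    case e'_8 => rfl
    rw [dot_jac, dot_jac]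
    simp only [softmax, Pi.smul_apply, smul_eq_mul]
    have hcEne : c * (∑ j, Real.exp (c * z t j)) ≠ 0 := mul_ne_zero hcne hEne
    have hccEne : c * c * (∑ j, Real.exp (c * z t j)) ≠ 0 :=
      mul_ne_zero (mul_ne_zero hcne hcne) hEne
    have hA1 : ∑ x, p t x * (Real.exp (c * z t x) / ∑ j, Real.exp (c * z t j)) * (c * z t x)
        = ((∑ i, c * z t i * (c * z t i) * Real.exp (c * z t i))
          + ∑ i, c * z t i * (Real.exp (c * z t i) * (c * (p t i - z t i))))
          / (c * ∑ j, Real.exp (c * z t j)) := by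
      rw [eq_div_iff hcEne, Finset.sum_mul, ← Finset.sum_add_distrib]
      refine Finset.sum_congr rfl fun i _ => ?_
      field_simp
      ring
    have hA2 : ∑ x, p t x * (Real.exp (c * z t x) / ∑ j, Real.exp (c * z t j))
        = ((∑ i, c * z t i * Real.exp (c * z t i))
          + ∑ i, Real.exp (c * z t i) * (c * (p t i - z t i)))
          / (c * ∑ j, Real.exp (c * z t j)) := by
      rw [eq_div_iff hcEne, Finset.sum_mul, ← Finset.sum_add_distrib]
      refine Finset.sum_congr rfl fun i _ => ?_
      field_simp
      ring
    have hA3 : ∑ x, (Real.exp (c * z t x) / ∑ j, Real.exp (c * z t j)) * (c * z t x)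
        = (∑ i, c * z t i * Real.exp (c * z t i)) / (∑ j, Real.exp (c * z t j)) := by
      rw [eq_div_iff hEne, Finset.sum_mul]
      refine Finset.sum_congr rfl fun i _ => ?_
      field_simp
    have hA4 : ∑ x, z t x * (Real.exp (c * z t x) / ∑ j, Real.exp (c * z t j)) * z t x
        = (∑ i, c * z t i * (c * z t i) * Real.exp (c * z t i))
          / (c * c * ∑ j, Real.exp (c * z t j)) := by
      rw [eq_div_iff hccEne, Finset.sum_mul]
      refine Finset.sum_congr rfl fun i _ => ?_
      field_simp
    have hA5 : ∑ x, z t x * (Real.exp (c * z t x) / ∑ j, Real.exp (c * z t j))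
        = (∑ i, c * z t i * Real.exp (c * z t i)) / (c * ∑ j, Real.exp (c * z t j)) := by
      rw [eq_div_iff hcEne, Finset.sum_mul]
      refine Finset.sum_congr rfl fun i _ => ?_
      field_simp
    have hA6 : ∑ x, (Real.exp (c * z t x) / ∑ j, Real.exp (c * z t j)) * z t x
        = (∑ i, c * z t i * Real.exp (c * z t i)) / (c * ∑ j, Real.exp (c * z t j)) := by
      rw [eq_div_iff hcEne, Finset.sum_mul]
      refine Finset.sum_congr rfl fun i _ => ?_
      field_simp
    have hA7 : (∑ i, ((c * (p t i - z t i) * Real.exp (c * z t i)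
          + c * z t i * (Real.exp (c * z t i) * (c * (p t i - z t i))))
            * ∑ j, Real.exp (c * z t j)
          - c * z t i * Real.exp (c * z t i)
            * ∑ j, Real.exp (c * z t j) * (c * (p t j - z t j)))
          / (∑ j, Real.exp (c * z t j)) ^ 2)
        = (((∑ i, Real.exp (c * z t i) * (c * (p t i - z t i)))
            + ∑ i, c * z t i * (Real.exp (c * z t i) * (c * (p t i - z t i))))
            * (∑ j, Real.exp (c * z t j))
          - (∑ i, c * z t i * Real.exp (c * z t i))
            * ∑ j, Real.exp (c * z t j) * (c * (p t j - z t j)))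
          / (∑ j, Real.exp (c * z t j)) ^ 2 := by
      rw [← Finset.sum_div]
      congr 1
      rw [Finset.sum_sub_distrib, ← Finset.sum_mul, ← Finset.sum_mul, Finset.sum_add_distrib]
      have : ∑ i, c * (p t i - z t i) * Real.exp (c * z t i)
          = ∑ i, Real.exp (c * z t i) * (c * (p t i - z t i)) :=
        Finset.sum_congr rfl fun i _ => mul_comm _ _
      rw [this]
    rw [hA1, hA2, hA3, hA4, hA5, hA6, hA7]
    set E' := ∑ j, Real.exp (c * z t j) with hE'
    set S2 := ∑ i, Real.exp (c * z t i) * (c * (p t i - z t i)) with hS2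
    set S3 := ∑ i, c * z t i * Real.exp (c * z t i) with hS3
    set S4 := ∑ i, c * z t i * (Real.exp (c * z t i) * (c * (p t i - z t i))) with hS4
    set Q := ∑ i, c * z t i * (c * z t i) * Real.exp (c * z t i) with hQ
    field_simp
    ring
  · have hq := quad_nonneg hn (c • z t) (z t)
    have hdot : p t ⬝ᵥ (1 / c) • (softmaxJac (c • z t)).mulVec (c • z t)
        = (1 / c) * (p t ⬝ᵥ (softmaxJac (c • z t)).mulVec (c • z t)) := by
      rw [dotProduct_smul, smul_eq_mul]
    rw [hdot]
    linarith
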